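/- Setup: let s ≥ 1 be an integer, let G be a finite simple graph on 8s vertices satisfying the planar bipartite edge bound and admitting no equitable 8-coloring, let x be a vertex of G, and let V_1, …, V_8 be an almost equitable coloring of G − x with small class V_1, auxiliary digraph H, accessible classes A and non-accessible classes B, chosen so that no almost equitable coloring of G − x has more accessible classes. Suppose there are exactly 5 accessible classes, x has no neighbor in any class of B, and the coloring is nice (every accessible class other than V_1 blocks at most one accessible class). Then every vertex v lying in a class V_i ∈ A \ {V_1} that has a solo neighbor in some class of B has a neighbor in every class of A \ {V_i}. (This is Lemma 4.5 of the paper.) -/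

import Mathlib

open scoped Classical

namespace Equitable

variable {V : Type*}

/-- An equitable `r`-coloring of `G`: a proper coloring with `r` colors whose
color classes pairwise differ in size by at most `1`. -/
def IsEquitableColoring [Fintype V] (G : SimpleGraph V) (r : ℕ) (c : V → Fin r) : Prop :=
  (∀ u v : V, G.Adj u v → c u ≠ c v) ∧
  ∀ i j : Fin r,
    (Finset.univ.filter fun v => c v = i).card ≤
      (Finset.univ.filter fun v => c v = j).card + 1

/-- The number of edges of `G` with both endpoints in `S`. -/
noncomputable def edgesWithin [Fintype V] (G : SimpleGraph V) (S : Finset V) : ℕ :=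
  (G.edgeFinset.filter fun e => ∀ v ∈ e, v ∈ S).card

/-- The number of edges of `G` with one endpoint in `X` and the other in `Y`. -/
noncomputable def edgesBetween [Fintype V] (G : SimpleGraph V) (X Y : Finset V) : ℕ :=
  (G.edgeFinset.filter fun e => ∃ u ∈ X, ∃ w ∈ Y, e = s(u, w)).card

/-- The semi-planar edge bounds. -/
def SemiPlanarBounds [Fintype V] (G : SimpleGraph V) : Prop :=
  (∀ S : Finset V, edgesWithin G S ≤ 3 * S.card) ∧
  ∀ X Y : Finset V, Disjoint X Y → edgesBetween G X Y ≤ 2 * (X.card + Y.card)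

/-- The planar edge bounds. -/
def PlanarBounds [Fintype V] (G : SimpleGraph V) : Prop :=
  (∀ S : Finset V, 3 ≤ S.card → edgesWithin G S ≤ 3 * S.card - 6) ∧
  ∀ X Y : Finset V, Disjoint X Y → 3 ≤ X.card + Y.card →
    edgesBetween G X Y ≤ 2 * (X.card + Y.card) - 4

/-- The semi-planar bipartite edge bound. -/
def SemiPlanarBipBound [Fintype V] (G : SimpleGraph V) : Prop :=
  ∀ X Y : Finset V, Disjoint X Y → edgesBetween G X Y ≤ 2 * (X.card + Y.card)

/-- The planar bipartite edge bound. -/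
def PlanarBipBound [Fintype V] (G : SimpleGraph V) : Prop :=
  ∀ X Y : Finset V, Disjoint X Y → 3 ≤ X.card + Y.card →
    edgesBetween G X Y ≤ 2 * (X.card + Y.card) - 4

/-- `P` is an almost equitable coloring of `G − x`: a partition of `V(G) \ {x}` into `r`
independent sets, the small class `P 0` of size `s − 1` and the other classes of size `s`. -/
def AEColoring [Fintype V] (G : SimpleGraph V) (x : V) {r : ℕ} [NeZero r] (s : ℕ)
    (P : Fin r → Finset V) : Prop :=
  (∀ i j : Fin r, i ≠ j → Disjoint (P i) (P j)) ∧
  (∀ v : V, (∃ i, v ∈ P i) ↔ v ≠ x) ∧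
  (∀ i : Fin r, ∀ u ∈ P i, ∀ w ∈ P i, ¬ G.Adj u w) ∧
  (P 0).card = s - 1 ∧
  ∀ i : Fin r, i ≠ 0 → (P i).card = s

/-- The arc relation of the auxiliary digraph `H`: an arc from class `i` to class `j`
iff `i ≠ j` and some vertex of `P i` has no `G`-neighbor in `P j` (such a vertex
is a witness of the arc and is called movable to `P j`). -/
def Arc (G : SimpleGraph V) {r : ℕ} (P : Fin r → Finset V) (i j : Fin r) : Prop :=
  i ≠ j ∧ ∃ v ∈ P i, ∀ u ∈ P j, ¬ G.Adj v u

/-- A class is accessible if the auxiliary digraph has a directed path (possibly of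
length `0`) from it to the small class `P 0`. -/
def Accessible (G : SimpleGraph V) {r : ℕ} [NeZero r] (P : Fin r → Finset V)
    (i : Fin r) : Prop :=
  Relation.ReflTransGen (Arc G P) i 0

/-- The number of accessible classes. -/
noncomputable def accCount (G : SimpleGraph V) {r : ℕ} [NeZero r]
    (P : Fin r → Finset V) : ℕ :=
  (Finset.univ.filter fun i => Accessible G P i).card

/-- No almost equitable coloring of `G − x` has more accessible classes than `P`. -/
def MaxAccessible [Fintype V] (G : SimpleGraph V) (x : V) {r : ℕ} [NeZero r] (s : ℕ)
    (P : Fin r → Finset V) : Prop :=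
  ∀ P' : Fin r → Finset V, AEColoring G x s P' → accCount G P' ≤ accCount G P

/-- Class `i` blocks class `j` if `i ≠ j` and the auxiliary digraph minus the
class `i` has no directed path from `j` to the small class `P 0`. -/
def Blocks (G : SimpleGraph V) {r : ℕ} [NeZero r] (P : Fin r → Finset V)
    (i j : Fin r) : Prop :=
  i ≠ j ∧ ¬ Relation.ReflTransGen (fun p q => Arc G P p q ∧ p ≠ i ∧ q ≠ i) j 0

/-- An accessible class is terminal if it blocks no accessible class. -/
def Terminal (G : SimpleGraph V) {r : ℕ} [NeZero r] (P : Fin r → Finset V)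
    (i : Fin r) : Prop :=
  Accessible G P i ∧ ∀ j : Fin r, Accessible G P j → ¬ Blocks G P i j

/-- `u` is a solo neighbor of `v` (where `v` lies in the accessible class `P i`):
`u` lies in a non-accessible class, is adjacent to `v`, and `v` is the unique
neighbor of `u` in `P i`.  `Q(v)` is the set of such `u`. -/
def SoloNbr (G : SimpleGraph V) {r : ℕ} [NeZero r] (P : Fin r → Finset V)
    (i : Fin r) (v u : V) : Prop :=
  (∃ k : Fin r, ¬ Accessible G P k ∧ u ∈ P k) ∧ G.Adj v u ∧
    ∀ w ∈ P i, G.Adj u w → w = v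

/-- `u ∈ Q'(v)`: `u` is a solo neighbor of `v` that is non-adjacent to some other
solo neighbor of `v`. -/
def InQ' (G : SimpleGraph V) {r : ℕ} [NeZero r] (P : Fin r → Finset V)
    (i : Fin r) (v u : V) : Prop :=
  SoloNbr G P i v u ∧ ∃ u' : V, SoloNbr G P i v u' ∧ u' ≠ u ∧ ¬ G.Adj u u'

/-- A vertex `v` of a terminal accessible class `P i` is ordinary if some other vertex of
`P i` is movable to another accessible class, or there are at most two accessible classes. -/
def Ordinary (G : SimpleGraph V) {r : ℕ} [NeZero r] (P : Fin r → Finset V)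
    (i : Fin r) (v : V) : Prop :=
  (∃ v' ∈ P i, v' ≠ v ∧
    ∃ j : Fin r, j ≠ i ∧ Accessible G P j ∧ ∀ w ∈ P j, ¬ G.Adj v' w) ∨
  accCount G P ≤ 2

/-- The strong component of the auxiliary digraph containing class `i`. -/
noncomputable def strongComp (G : SimpleGraph V) {r : ℕ} (P : Fin r → Finset V)
    (i : Fin r) : Finset (Fin r) :=
  Finset.univ.filter fun j =>
    Relation.ReflTransGen (Arc G P) i j ∧ Relation.ReflTransGen (Arc G P) j i



section Helpers

/-- From a membership in a chain, extract a suffix chain starting there. -/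
lemma chain_suffix {α : Type*} {r : α → α → Prop} :
    ∀ (L : List α) (c : α), List.Chain r c L → ∀ a ∈ c :: L,
      ∃ t, List.Chain r a t ∧ (a :: t) <:+ (c :: L) := by
  intro L
  induction L with
  | nil =>
    intro c _ a ha
    simp only [List.mem_singleton] at ha
    exact ⟨[], List.Chain.nil, by simp [ha]⟩
  | cons d L' ih =>
    intro c hch a ha
    rcases List.mem_cons.mp ha with h | h
    · exact ⟨d :: L', h ▸ hch, h ▸ List.suffix_refl _⟩
    · rcases List.chain_cons.mp hch with ⟨_, hch'⟩
      obtain ⟨t, ht, hsuf⟩ := ih d hch' a h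
      exact ⟨t, ht, hsuf.trans (List.suffix_cons c (d :: L'))⟩

lemma getLast_of_suffix {α : Type*} {l₁ l₂ : List α} (h : l₁ <:+ l₂) (h₁ : l₁ ≠ []) :
    l₁.getLast h₁ = l₂.getLast (by rintro rfl; exact h₁ (List.suffix_nil.mp h)) := by
  obtain ⟨pre, rfl⟩ := h
  exact (List.getLast_append_of_ne_nil _ h₁).symm

/-- Duplicate-free chain extraction from `ReflTransGen`. -/
lemma exists_nodup_chain {α : Type*} {r : α → α → Prop} {a b : α}
    (h : Relation.ReflTransGen r a b) :
    ∃ L : List α, List.Chain r a L ∧ (a :: L).getLast (by simp) = b ∧ (a :: L).Nodup := by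
  induction h using Relation.ReflTransGen.head_induction_on with
  | refl => exact ⟨[], List.Chain.nil, rfl, List.nodup_singleton b⟩
  | head hac _ ih =>
    rename_i a' c' _
    obtain ⟨L, hch, hlast, hnd⟩ := ih
    by_cases hmem : a' ∈ c' :: L
    · obtain ⟨t, ht, hsuf⟩ := chain_suffix L c' hch a' hmem
      refine ⟨t, ht, ?_, hnd.sublist hsuf.sublist⟩
      rw [getLast_of_suffix hsuf (by simp)]; exact hlast
    · exact ⟨c' :: L, List.chain_cons.mpr ⟨hac, hch⟩, hlast, List.nodup_cons.mpr ⟨hmem, hnd⟩⟩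

/-- Every node of a chain reaches the last element. -/
lemma chain_nodes_rtg {α : Type*} {r : α → α → Prop} :
    ∀ (L : List α) (c : α), List.Chain r c L → ∀ a ∈ c :: L,
      Relation.ReflTransGen r a ((c :: L).getLast (by simp)) := by
  intro L c hch a ha
  obtain ⟨t, ht, hsuf⟩ := chain_suffix L c hch a ha
  rw [← getLast_of_suffix hsuf (by simp)]
  clear hsuf hch ha
  induction t generalizing a with
  | nil => exact Relation.ReflTransGen.refl
  | cons d t' ih =>
    rcases List.chain_cons.mp ht with ⟨had, ht'⟩
    refine Relation.ReflTransGen.head had ?_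
    have := ih d ht'
    rwa [List.getLast_cons (by simp)]

lemma chain_mem_of_rel {α : Type*} {r : α → α → Prop} {p : α → Prop}
    (hp : ∀ x y, r x y → p y) :
    ∀ (L : List α) (c : α), List.Chain r c L → ∀ a ∈ L, p a := by
  intro L
  induction L with
  | nil => intro c _ a ha; simp at ha
  | cons d L' ih =>
    intro c hch a ha
    rcases List.chain_cons.mp hch with ⟨hcd, hch'⟩
    rcases List.mem_cons.mp ha with h | h
    · exact h ▸ hp _ _ hcd
    · exact ih d hch' a h

lemma chain_restrict {α : Type*} {r : α → α → Prop} {p : α → Prop} :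
    ∀ (L : List α) (c : α), List.Chain r c L → (∀ a ∈ c :: L, p a) →
      List.Chain (fun x y => r x y ∧ p x ∧ p y) c L := by
  intro L
  induction L with
  | nil => intro c _ _; exact List.Chain.nil
  | cons d L' ih =>
    intro c hch hall
    rcases List.chain_cons.mp hch with ⟨hcd, hch'⟩
    refine List.chain_cons.mpr ⟨⟨hcd, hall c (by simp), hall d (by simp)⟩, ?_⟩
    exact ih d hch' (fun a ha => hall a (List.mem_cons.mpr (Or.inr ha)))

lemma chain_rtg_restricted {α : Type*} {r : α → α → Prop} {p : α → Prop}
    (L : List α) (c : α) (hch : List.Chain r c L) (hall : ∀ a ∈ c :: L, p a) :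
    Relation.ReflTransGen (fun x y => r x y ∧ p x ∧ p y) c ((c :: L).getLast (by simp)) :=
  chain_nodes_rtg L c (chain_restrict L c hch hall) c (by simp)

variable [Fintype V] {G : SimpleGraph V} {x : V}

/-- Moving a single vertex `z` from class `a` to class `b` (where `z` has no neighbor in
class `b`) preserves disjointness, coverage and independence. -/
lemma move_props (Q Q2 : Fin 8 → Finset V)
    (hdis : ∀ i j : Fin 8, i ≠ j → Disjoint (Q i) (Q j))
    (hcov : ∀ y : V, (∃ k, y ∈ Q k) ↔ y ≠ x)
    (hind : ∀ k : Fin 8, ∀ p ∈ Q k, ∀ q ∈ Q k, ¬ G.Adj p q)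
    (a b : Fin 8) (z : V) (hza : z ∈ Q a)
    (hznb : ∀ w ∈ Q b, ¬ G.Adj z w)
    (hQ2a : Q2 a = (Q a).erase z) (hQ2b : Q2 b = insert z (Q b))
    (hQ2k : ∀ k, k ≠ a → k ≠ b → Q2 k = Q k) :
    (∀ i j : Fin 8, i ≠ j → Disjoint (Q2 i) (Q2 j)) ∧
    (∀ y : V, (∃ k, y ∈ Q2 k) ↔ y ≠ x) ∧
    (∀ k : Fin 8, ∀ p ∈ Q2 k, ∀ q ∈ Q2 k, ¬ G.Adj p q) := by
  have hmem : ∀ k y, y ∈ Q2 k → y ≠ z → y ∈ Q k := by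
    intro k y hy hyz
    by_cases hkb : k = b
    · rw [hkb, hQ2b] at hy
      rw [hkb]
      exact (Finset.mem_insert.mp hy).resolve_left hyz
    by_cases hka : k = a
    · rw [hka, hQ2a] at hy; rw [hka]; exact Finset.mem_of_mem_erase hy
    · rwa [hQ2k k hka hkb] at hy
  have hzmem : ∀ k, z ∈ Q2 k → k = b := by
    intro k hz
    by_cases hkb : k = b
    · exact hkb
    by_cases hka : k = a
    · rw [hka, hQ2a] at hz; exact absurd hz (Finset.notMem_erase _ _)
    · rw [hQ2k k hka hkb] at hz
      exact absurd hza (Finset.disjoint_left.mp (hdis k a hka) hz)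
  refine ⟨?_, ?_, ?_⟩
  · intro i j hij
    rw [Finset.disjoint_left]
    intro y hyi hyj
    by_cases hyz : y = z
    · rw [hyz] at hyi hyj
      exact hij ((hzmem i hyi).trans (hzmem j hyj).symm)
    · exact Finset.disjoint_left.mp (hdis i j hij) (hmem i y hyi hyz) (hmem j y hyj hyz)
  · intro y
    constructor
    · rintro ⟨k, hk⟩
      by_cases hyz : y = z
      · rw [hyz]; exact (hcov z).mp ⟨a, hza⟩
      · exact (hcov y).mp ⟨k, hmem k y hk hyz⟩
    · intro hy
      obtain ⟨k, hk⟩ := (hcov y).mpr hy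
      by_cases hyz : y = z
      · exact ⟨b, by rw [hQ2b, hyz]; exact Finset.mem_insert_self _ _⟩
      by_cases hkb : k = b
      · exact ⟨b, by rw [hQ2b]; exact Finset.mem_insert_of_mem (hkb ▸ hk)⟩
      by_cases hka : k = a
      · exact ⟨a, by rw [hQ2a]; exact Finset.mem_erase.mpr ⟨hyz, hka ▸ hk⟩⟩
      · exact ⟨k, by rw [hQ2k k hka hkb]; exact hk⟩
  · intro k p hp q hq hadj
    by_cases hpz : p = z
    · rw [hpz] at hp hadj
      have hkb := hzmem k hp
      rw [hkb] at hq
      by_cases hqz : q = z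
      · rw [hqz] at hadj; exact G.loopless.irrefl _ hadj
      · exact hznb q (hmem b q hq hqz) hadj
    by_cases hqz : q = z
    · rw [hqz] at hq hadj
      have hkb := hzmem k hq
      rw [hkb] at hp
      exact hznb p (hmem b p hp hpz) (G.adj_symm hadj)
    · exact hind k p (hmem k p hp hpz) q (hmem k q hq hqz) hadj

/-- Shifting witnesses along a duplicate-free path of arcs ending at the small class `0`
produces a rearranged coloring whose deficient class is the start of the path. -/
lemma shift (s : ℕ) (hs : 1 ≤ s) (P : Fin 8 → Finset V) (hP : AEColoring G x s P) :
    ∀ (L : List (Fin 8)) (W : Fin 8), List.Chain (Arc G P) W L →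
      (W :: L).getLast (by simp) = 0 → (W :: L).Nodup →
      ∃ Q : Fin 8 → Finset V,
        (∀ a b : Fin 8, a ≠ b → Disjoint (Q a) (Q b)) ∧
        (∀ y : V, (∃ k, y ∈ Q k) ↔ y ≠ x) ∧
        (∀ k : Fin 8, ∀ a ∈ Q k, ∀ b ∈ Q k, ¬ G.Adj a b) ∧
        Q W ⊆ P W ∧ (Q W).card = s - 1 ∧ (∀ k, k ≠ W → (Q k).card = s) ∧
        (∀ k, k ∉ W :: L → Q k = P k) := by
  obtain ⟨hdis, hcov, hind, hc0, hcs⟩ := hP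
  intro L
  induction L with
  | nil =>
    intro W _ hlast _
    simp only [List.getLast_singleton] at hlast
    subst hlast
    exact ⟨P, hdis, hcov, hind, subset_rfl, hc0, fun k hk => hcs k hk, fun _ _ => rfl⟩
  | cons c L' ih =>
    intro W hch hlast hnd
    rcases List.chain_cons.mp hch with ⟨⟨hWc, z, hzW, hz⟩, hch'⟩
    have hndt : (c :: L').Nodup := (List.nodup_cons.mp hnd).2
    have hWmem : W ∉ c :: L' := (List.nodup_cons.mp hnd).1
    have hlast' : (c :: L').getLast (by simp) = 0 := by
      rw [← hlast]; exact (List.getLast_cons (by simp)).symm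
    obtain ⟨Q', hdis', hcov', hind', hsub', hcard0', hcards', hpres'⟩ := ih c hch' hlast' hndt
    have hQW : Q' W = P W := hpres' W hWmem
    have hWne : W ≠ c := fun h => hWmem (h ▸ List.mem_cons_self (a := c) (l := L'))
    have hW0 : W ≠ 0 := by
      intro h
      apply hWmem
      have := List.getLast_mem (l := c :: L') (by simp)
      rwa [hlast', ← h] at this
    set Q2 : Fin 8 → Finset V := fun k =>
      if k = W then (P W).erase z else if k = c then insert z (Q' c) else Q' k with hQ2def
    have hQ2a : Q2 W = (P W).erase z := by simp [hQ2def]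
    have hQ2b : Q2 c = insert z (Q' c) := by simp [hQ2def, hWne.symm]
    have hQ2k : ∀ k, k ≠ W → k ≠ c → Q2 k = Q' k := by
      intro k h1 h2; simp [hQ2def, h1, h2]
    have hznb : ∀ w ∈ Q' c, ¬ G.Adj z w := fun w hw => hz w (hsub' hw)
    obtain ⟨hdis2, hcov2, hind2⟩ := move_props (G := G) (x := x) Q' Q2 hdis' hcov' hind'
      W c z (by rw [hQW]; exact hzW) hznb (by rw [hQ2a, hQW]) hQ2b hQ2k
    refine ⟨Q2, hdis2, hcov2, hind2, ?_, ?_, ?_, ?_⟩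
    · rw [hQ2a]; exact Finset.erase_subset _ _
    · rw [hQ2a, Finset.card_erase_of_mem hzW, hcs W hW0]
    · intro k hk
      by_cases hkc : k = c
      · rw [hkc, hQ2b, Finset.card_insert_of_notMem, hcard0']
        · omega
        · intro hmem
          exact Finset.disjoint_left.mp (hdis' W c hWne) (by rw [hQW]; exact hzW) hmem
      · rw [hQ2k k hk hkc]; exact hcards' k hkc
    · intro k hk
      have h1 : k ≠ W := fun h => hk (h ▸ List.mem_cons_self)
      have h2 : k ∉ c :: L' := fun h => hk (List.mem_cons_of_mem _ h)
      have h3 : k ≠ c := fun h => h2 (h ▸ List.mem_cons_self)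
      rw [hQ2k k h1 h3]
      exact hpres' k h2

/-- Adding the vertex `x` to a class where it has no neighbors. -/
lemma add_x_props (Q Qf : Fin 8 → Finset V)
    (hdis : ∀ i j : Fin 8, i ≠ j → Disjoint (Q i) (Q j))
    (hcov : ∀ y : V, (∃ k, y ∈ Q k) ↔ y ≠ x)
    (hind : ∀ k : Fin 8, ∀ p ∈ Q k, ∀ q ∈ Q k, ¬ G.Adj p q)
    (U : Fin 8) (hxnb : ∀ w ∈ Q U, ¬ G.Adj x w)
    (hQfU : Qf U = insert x (Q U)) (hQfk : ∀ k, k ≠ U → Qf k = Q k) :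
    (∀ i j : Fin 8, i ≠ j → Disjoint (Qf i) (Qf j)) ∧
    (∀ y : V, ∃ k, y ∈ Qf k) ∧
    (∀ k : Fin 8, ∀ p ∈ Qf k, ∀ q ∈ Qf k, ¬ G.Adj p q) := by
  have hxQ : ∀ k, x ∉ Q k := by
    intro k hk
    exact ((hcov x).mp ⟨k, hk⟩) rfl
  have hmem : ∀ k y, y ∈ Qf k → y ≠ x → y ∈ Q k := by
    intro k y hy hyx
    by_cases hkU : k = U
    · rw [hkU, hQfU] at hy; rw [hkU]
      exact (Finset.mem_insert.mp hy).resolve_left hyx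
    · rwa [hQfk k hkU] at hy
  have hxmem : ∀ k, x ∈ Qf k → k = U := by
    intro k hk
    by_cases hkU : k = U
    · exact hkU
    · rw [hQfk k hkU] at hk; exact absurd hk (hxQ k)
  refine ⟨?_, ?_, ?_⟩
  · intro a b hab
    rw [Finset.disjoint_left]
    intro y hya hyb
    by_cases hyx : y = x
    · rw [hyx] at hya hyb
      exact hab ((hxmem a hya).trans (hxmem b hyb).symm)
    · exact Finset.disjoint_left.mp (hdis a b hab) (hmem a y hya hyx) (hmem b y hyb hyx)
  · intro y
    by_cases hyx : y = x
    · exact ⟨U, by rw [hQfU, hyx]; exact Finset.mem_insert_self _ _⟩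
    · obtain ⟨k, hk⟩ := (hcov y).mpr hyx
      by_cases hkU : k = U
      · exact ⟨U, by rw [hQfU]; exact Finset.mem_insert_of_mem (hkU ▸ hk)⟩
      · exact ⟨k, by rw [hQfk k hkU]; exact hk⟩
  · intro k p hp q hq hadj
    by_cases hpx : p = x
    · rw [hpx] at hp hadj
      rw [hxmem k hp] at hq
      by_cases hqx : q = x
      · rw [hqx] at hadj; exact G.loopless.irrefl _ hadj
      · exact hxnb q (hmem U q hq hqx) hadj
    by_cases hqx : q = x
    · rw [hqx] at hq hadj
      rw [hxmem k hq] at hp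
      exact hxnb p (hmem U p hp hpx) (G.adj_symm hadj)
    · exact hind k p (hmem k p hp hpx) q (hmem k q hq hqx) hadj

/-- A disjoint covering family of independent sets of equal size yields an
equitable coloring. -/
lemma exists_equitable_of_partition (Qf : Fin 8 → Finset V) (s : ℕ)
    (hdis : ∀ i j : Fin 8, i ≠ j → Disjoint (Qf i) (Qf j))
    (hcov : ∀ y : V, ∃ k, y ∈ Qf k)
    (hind : ∀ k : Fin 8, ∀ p ∈ Qf k, ∀ q ∈ Qf k, ¬ G.Adj p q)
    (hcards : ∀ k, (Qf k).card = s) :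
    ∃ c : V → Fin 8, IsEquitableColoring G 8 c := by
  set c : V → Fin 8 := fun y => (hcov y).choose with hcdef
  have hspec : ∀ y, y ∈ Qf (c y) := fun y => (hcov y).choose_spec
  have key : ∀ k : Fin 8, (Finset.univ.filter fun y => c y = k) = Qf k := by
    intro k
    ext y
    simp only [Finset.mem_filter, Finset.mem_univ, true_and]
    constructor
    · rintro rfl; exact hspec y
    · intro hy
      by_contra hne
      exact Finset.disjoint_left.mp (hdis _ k hne) (hspec y) hy
  refine ⟨c, ?_, ?_⟩
  · intro p q hadj hcpq
    have hp : p ∈ Qf (c p) := hspec p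
    have hq : q ∈ Qf (c q) := hspec q
    rw [← hcpq] at hq
    exact hind _ p hp q hq hadj
  · intro a b
    rw [key a, key b, hcards a, hcards b]
    omega

/-- Case A of the main argument: if the blocked class hypothesis fails, i.e. there is a
path from `W` to the small class avoiding `i`, then `G` has an equitable coloring. -/
lemma caseA (s : ℕ) (hs : 1 ≤ s) (P : Fin 8 → Finset V) (hP : AEColoring G x s P)
    (i : Fin 8) (hiacc : Accessible G P i) (hi0 : i ≠ 0) (v : V) (hvi : v ∈ P i)
    (U : Fin 8) (hUnacc : ¬ Accessible G P U) (u : V) (huU : u ∈ P U)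
    (hsolo : ∀ w ∈ P i, G.Adj u w → w = v)
    (hxU : ∀ w ∈ P U, ¬ G.Adj x w)
    (W : Fin 8) (hWi : W ≠ i)
    (hWpath : Relation.ReflTransGen (fun p q => Arc G P p q ∧ p ≠ i ∧ q ≠ i) W 0)
    (hvW : ∀ w ∈ P W, ¬ G.Adj v w) :
    ∃ c : V → Fin 8, IsEquitableColoring G 8 c := by
  obtain ⟨hdis, hcov, hind, hc0, hcs⟩ := hP
  have hPfull : AEColoring G x s P := ⟨hdis, hcov, hind, hc0, hcs⟩
  obtain ⟨L, hch', hlast, hnd⟩ := exists_nodup_chain hWpath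
  have hchArc : List.Chain (Arc G P) W L := List.Chain.imp (fun ⦃_ _⦄ h => h.1) hch'
  have hne_i : ∀ k ∈ W :: L, k ≠ i := by
    intro k hk
    rcases List.mem_cons.mp hk with h | h
    · exact h ▸ hWi
    · exact chain_mem_of_rel (fun p q hr => hr.2.2) L W hch' k h
  have hacc : ∀ k ∈ W :: L, Accessible G P k := by
    intro k hk
    have := chain_nodes_rtg L W hchArc k hk
    rwa [hlast] at this
  have hiL : i ∉ W :: L := fun h => (hne_i i h) rfl
  have hUL : U ∉ W :: L := fun h => hUnacc (hacc U h)
  obtain ⟨Q, Qdis, Qcov, Qind, QsubW, QcardW, Qcards, Qpres⟩ :=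
    shift s hs P hPfull L W hchArc hlast hnd
  have hQiP : Q i = P i := Qpres i hiL
  have hQUP : Q U = P U := Qpres U hUL
  have hacc0 : Accessible G P 0 := Relation.ReflTransGen.refl
  have hU0 : U ≠ 0 := fun h => hUnacc (h ▸ hacc0)
  have hUi : U ≠ i := fun h => hUnacc (h ▸ hiacc)
  have hUW : U ≠ W := fun h => hUL (h ▸ List.mem_cons_self (a := W) (l := L))
  have hxnotin : ∀ k, x ∉ P k := fun k hk => ((hcov x).mp ⟨k, hk⟩) rfl
  -- move v from i to W
  set Q3 : Fin 8 → Finset V := fun k =>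
    if k = i then (P i).erase v else if k = W then insert v (Q W) else Q k with hQ3def
  have hQ3i : Q3 i = (P i).erase v := by simp [hQ3def]
  have hQ3W : Q3 W = insert v (Q W) := by simp [hQ3def, hWi]
  have hQ3k : ∀ k, k ≠ i → k ≠ W → Q3 k = Q k := by
    intro k h1 h2; simp [hQ3def, h1, h2]
  obtain ⟨Q3dis, Q3cov, Q3ind⟩ := move_props (G := G) (x := x) Q Q3 Qdis Qcov Qind i W v
    (by rw [hQiP]; exact hvi) (fun w hw => hvW w (QsubW hw))
    (by rw [hQ3i, hQiP]) hQ3W hQ3k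
  -- move u from U to i
  set Q4 : Fin 8 → Finset V := fun k =>
    if k = U then (P U).erase u else if k = i then insert u ((P i).erase v) else Q3 k
    with hQ4def
  have hQ4U : Q4 U = (P U).erase u := by simp [hQ4def]
  have hQ4i : Q4 i = insert u ((P i).erase v) := by simp [hQ4def, hUi.symm]
  have hQ4k : ∀ k, k ≠ U → k ≠ i → Q4 k = Q3 k := by
    intro k h1 h2; simp [hQ4def, h1, h2]
  obtain ⟨Q4dis, Q4cov, Q4ind⟩ := move_props (G := G) (x := x) Q3 Q4 Q3dis Q3cov Q3ind U i u
    (by rw [hQ3k U hUi hUW, hQUP]; exact huU)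
    (by
      intro w hw hadj
      rw [hQ3i] at hw
      obtain ⟨hwv, hwPi⟩ := Finset.mem_erase.mp hw
      exact hwv (hsolo w hwPi hadj))
    (by rw [hQ4U, hQ3k U hUi hUW, hQUP]) (by rw [hQ4i, hQ3i]) hQ4k
  -- add x to the class U
  set Qf : Fin 8 → Finset V := fun k =>
    if k = U then insert x ((P U).erase u) else Q4 k with hQfdef
  have hQfU : Qf U = insert x (Q4 U) := by rw [hQ4U]; simp [hQfdef]
  have hQfk : ∀ k, k ≠ U → Qf k = Q4 k := by intro k h1; simp [hQfdef, h1]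
  obtain ⟨Fdis, Fcov, Find⟩ := add_x_props (G := G) (x := x) Q4 Qf Q4dis Q4cov Q4ind U
    (by
      intro w hw
      rw [hQ4U] at hw
      exact hxU w (Finset.mem_of_mem_erase hw))
    hQfU hQfk
  -- cardinalities
  refine exists_equitable_of_partition Qf s Fdis Fcov Find ?_
  intro k
  by_cases hkU : k = U
  · rw [hkU, hQfU, hQ4U, Finset.card_insert_of_notMem
      (fun h => hxnotin U (Finset.mem_of_mem_erase h)),
      Finset.card_erase_of_mem huU, hcs U hU0]
    omega
  rw [hQfk k hkU]
  by_cases hki : k = i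
  · rw [hki, hQ4i, Finset.card_insert_of_notMem
      (fun h => Finset.disjoint_left.mp (hdis U i hUi) huU (Finset.mem_of_mem_erase h)),
      Finset.card_erase_of_mem hvi, hcs i hi0]
    omega
  rw [hQ4k k hkU hki]
  by_cases hkW : k = W
  · rw [hkW, hQ3W, Finset.card_insert_of_notMem
      (fun h => Finset.disjoint_left.mp (hdis i W (fun h' => hWi h'.symm)) hvi (QsubW h)),
      QcardW]
    omega
  · rw [hQ3k k hki hkW]
    exact Qcards k hkW

/-- Case B1: the missed class `W` is blocked by `i`, but some vertex `w ∈ P W` movable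
to `P i` is non-adjacent to the solo neighbor `u`.  Then `G` has an equitable coloring. -/
lemma caseB1 (s : ℕ) (hs : 1 ≤ s) (P : Fin 8 → Finset V) (hP : AEColoring G x s P)
    (i : Fin 8) (hiacc : Accessible G P i) (hi0 : i ≠ 0) (v : V) (hvi : v ∈ P i)
    (U : Fin 8) (hUnacc : ¬ Accessible G P U) (u : V) (huU : u ∈ P U)
    (hsolo : ∀ b ∈ P i, G.Adj u b → b = v)
    (hxU : ∀ b ∈ P U, ¬ G.Adj x b)
    (W : Fin 8) (hWi : W ≠ i)
    (hWacc : Accessible G P W)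
    (hblock : ¬ Relation.ReflTransGen (fun p q => Arc G P p q ∧ p ≠ i ∧ q ≠ i) W 0)
    (hvW : ∀ b ∈ P W, ¬ G.Adj v b)
    (hMiss : ∀ X : Fin 8, Accessible G P X → X ≠ i → X ≠ W → ∃ b ∈ P X, G.Adj v b)
    (w : V) (hwW : w ∈ P W) (hwPi : ∀ b ∈ P i, ¬ G.Adj w b) (hwu : ¬ G.Adj u w) :
    ∃ c : V → Fin 8, IsEquitableColoring G 8 c := by
  obtain ⟨hdis, hcov, hind, hc0, hcs⟩ := hP
  have hPfull : AEColoring G x s P := ⟨hdis, hcov, hind, hc0, hcs⟩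
  -- a duplicate-free path of arcs from i to the small class
  obtain ⟨L, hch, hlast, hnd⟩ := exists_nodup_chain hiacc
  have hiL : i ∉ L := (List.nodup_cons.mp hnd).1
  have haccL : ∀ k ∈ i :: L, Accessible G P k := by
    intro k hk
    have := chain_nodes_rtg L i hch k hk
    rwa [hlast] at this
  -- W does not occur on the path
  have hWL : W ∉ i :: L := by
    intro hmem
    rcases List.mem_cons.mp hmem with h | h
    · exact hWi h
    obtain ⟨t, ht, hsuf⟩ := chain_suffix L i hch W (List.mem_cons_of_mem _ h)
    have hsuf' : W :: t <:+ L := by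
      rcases List.suffix_cons_iff.mp hsuf with h' | h'
      · exact absurd (List.cons_eq_cons.mp h').1 hWi
      · exact h'
    have hnei : ∀ a ∈ W :: t, a ≠ i := by
      intro a ha h'
      exact hiL (h' ▸ hsuf'.subset ha)
    have hlast2 : (W :: t).getLast (by simp) = 0 := by
      rw [getLast_of_suffix hsuf (by simp)]
      exact hlast
    have := chain_rtg_restricted (p := fun k => k ≠ i) t W ht hnei
    rw [hlast2] at this
    exact hblock this
  have hUL : U ∉ i :: L := fun h => hUnacc (haccL U h)
  -- split the path
  have hLne : L ≠ [] := by
    intro h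
    rw [h] at hlast
    simp only [List.getLast_singleton] at hlast
    exact hi0 hlast
  obtain ⟨d1, rest, rfl⟩ := List.exists_cons_of_ne_nil hLne
  rcases List.chain_cons.mp hch with ⟨⟨hid1, y0, hy0Pi, hy0nb⟩, hch'⟩
  have hd1i : d1 ≠ i := fun h => hiL (h ▸ List.mem_cons_self)
  have hd1W : d1 ≠ W := fun h => hWL (h ▸ List.mem_cons_of_mem _ (List.mem_cons_self))
  have hd1U : d1 ≠ U := fun h => hUnacc (h ▸ haccL d1 (List.mem_cons_of_mem _ (List.mem_cons_self)))
  have hd1acc : Accessible G P d1 := haccL d1 (List.mem_cons_of_mem _ (List.mem_cons_self))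
  -- the witness y0 differs from v
  have hy0v : y0 ≠ v := by
    obtain ⟨b, hb, hvb⟩ := hMiss d1 hd1acc hd1i hd1W
    intro h
    exact hy0nb b hb (h ▸ hvb)
  have hlast' : (d1 :: rest).getLast (by simp) = 0 := by
    rw [← hlast]
    exact (List.getLast_cons (by simp)).symm
  have hndt : (d1 :: rest).Nodup := (List.nodup_cons.mp hnd).2
  obtain ⟨Q, Qdis, Qcov, Qind, Qsubd1, Qcardd1, Qcards, Qpres⟩ :=
    shift s hs P hPfull rest d1 hch' hlast' hndt
  have hQi : Q i = P i := Qpres i hiL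
  have hQW : Q W = P W := Qpres W (fun h => hWL (List.mem_cons_of_mem _ h))
  have hQU : Q U = P U := Qpres U (fun h => hUL (List.mem_cons_of_mem _ h))
  have hacc0 : Accessible G P 0 := Relation.ReflTransGen.refl
  have hU0 : U ≠ 0 := fun h => hUnacc (h ▸ hacc0)
  have hUi : U ≠ i := fun h => hUnacc (h ▸ hiacc)
  have hUW : U ≠ W := fun h => hUnacc (h ▸ hWacc)
  have hW0 : W ≠ 0 := by
    intro h
    exact hblock (h ▸ Relation.ReflTransGen.refl)
  have hxnotin : ∀ k, x ∉ P k := fun k hk => ((hcov x).mp ⟨k, hk⟩) rfl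
  have hwv : w ≠ v := fun h => (Finset.disjoint_left.mp (hdis W i hWi) hwW (h ▸ hvi))
  have hwu' : u ≠ w := fun h => Finset.disjoint_left.mp (hdis U W hUW) huU (by rw [h]; exact hwW)
  -- move y0 from i to d1
  set Q3 : Fin 8 → Finset V := fun k =>
    if k = i then (P i).erase y0 else if k = d1 then insert y0 (Q d1) else Q k with hQ3def
  have hQ3i : Q3 i = (P i).erase y0 := by simp [hQ3def]
  have hQ3d1 : Q3 d1 = insert y0 (Q d1) := by simp [hQ3def, hd1i]
  have hQ3k : ∀ k, k ≠ i → k ≠ d1 → Q3 k = Q k := by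
    intro k h1 h2; simp [hQ3def, h1, h2]
  obtain ⟨Q3dis, Q3cov, Q3ind⟩ := move_props (G := G) (x := x) Q Q3 Qdis Qcov Qind i d1 y0
    (by rw [hQi]; exact hy0Pi) (fun b hb => hy0nb b (Qsubd1 hb))
    (by rw [hQ3i, hQi]) hQ3d1 hQ3k
  -- move v from i to W
  set Q4 : Fin 8 → Finset V := fun k =>
    if k = i then ((P i).erase y0).erase v else if k = W then insert v (P W) else Q3 k
    with hQ4def
  have hQ4i : Q4 i = ((P i).erase y0).erase v := by simp [hQ4def]
  have hQ4W : Q4 W = insert v (P W) := by simp [hQ4def, hWi]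
  have hQ4k : ∀ k, k ≠ i → k ≠ W → Q4 k = Q3 k := by
    intro k h1 h2; simp [hQ4def, h1, h2]
  obtain ⟨Q4dis, Q4cov, Q4ind⟩ := move_props (G := G) (x := x) Q3 Q4 Q3dis Q3cov Q3ind i W v
    (by rw [hQ3i]; exact Finset.mem_erase.mpr ⟨fun h => hy0v h.symm, hvi⟩)
    (by rw [hQ3k W hWi (fun h => hd1W h.symm), hQW]; exact hvW)
    (by rw [hQ4i, hQ3i]) (by rw [hQ4W, hQ3k W hWi (fun h => hd1W h.symm), hQW]) hQ4k
  -- move w from W to i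
  set Q5 : Fin 8 → Finset V := fun k =>
    if k = W then (insert v (P W)).erase w
    else if k = i then insert w (((P i).erase y0).erase v) else Q4 k with hQ5def
  have hQ5W : Q5 W = (insert v (P W)).erase w := by simp [hQ5def]
  have hQ5i : Q5 i = insert w (((P i).erase y0).erase v) := by simp [hQ5def, hWi.symm]
  have hQ5k : ∀ k, k ≠ W → k ≠ i → Q5 k = Q4 k := by
    intro k h1 h2; simp [hQ5def, h1, h2]
  obtain ⟨Q5dis, Q5cov, Q5ind⟩ := move_props (G := G) (x := x) Q4 Q5 Q4dis Q4cov Q4ind W i w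
    (by rw [hQ4W]; exact Finset.mem_insert_of_mem hwW)
    (by
      intro b hb
      rw [hQ4i] at hb
      exact hwPi b (Finset.mem_of_mem_erase (Finset.mem_of_mem_erase hb)))
    (by rw [hQ5W, hQ4W]) (by rw [hQ5i, hQ4i]) hQ5k
  -- move u from U to i
  set Q6 : Fin 8 → Finset V := fun k =>
    if k = U then (P U).erase u
    else if k = i then insert u (insert w (((P i).erase y0).erase v)) else Q5 k with hQ6def
  have hQ6U : Q6 U = (P U).erase u := by simp [hQ6def]
  have hQ6i : Q6 i = insert u (insert w (((P i).erase y0).erase v)) := by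
    simp [hQ6def, hUi.symm]
  have hQ6k : ∀ k, k ≠ U → k ≠ i → Q6 k = Q5 k := by
    intro k h1 h2; simp [hQ6def, h1, h2]
  have hQ5U : Q5 U = P U := by
    rw [hQ5k U hUW hUi, hQ4k U hUi hUW, hQ3k U hUi (fun h => hd1U h.symm), hQU]
  obtain ⟨Q6dis, Q6cov, Q6ind⟩ := move_props (G := G) (x := x) Q5 Q6 Q5dis Q5cov Q5ind U i u
    (by rw [hQ5U]; exact huU)
    (by
      intro b hb hadj
      rw [hQ5i] at hb
      rcases Finset.mem_insert.mp hb with h | h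
      · exact hwu (h ▸ hadj)
      · have hbPi : b ∈ P i := Finset.mem_of_mem_erase (Finset.mem_of_mem_erase h)
        have : b = v := hsolo b hbPi hadj
        exact (Finset.mem_erase.mp h).1 this)
    (by rw [hQ6U, hQ5U]) (by rw [hQ6i, hQ5i]) hQ6k
  -- add x to the class U
  set Qf : Fin 8 → Finset V := fun k =>
    if k = U then insert x ((P U).erase u) else Q6 k with hQfdef
  have hQfU : Qf U = insert x (Q6 U) := by rw [hQ6U]; simp [hQfdef]
  have hQfk : ∀ k, k ≠ U → Qf k = Q6 k := by intro k h1; simp [hQfdef, h1]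
  obtain ⟨Fdis, Fcov, Find⟩ := add_x_props (G := G) (x := x) Q6 Qf Q6dis Q6cov Q6ind U
    (by
      intro b hb
      rw [hQ6U] at hb
      exact hxU b (Finset.mem_of_mem_erase hb))
    hQfU hQfk
  -- cardinalities
  have hs2 : 2 ≤ s := by
    rw [← hcs i hi0]
    exact Finset.one_lt_card.mpr ⟨v, hvi, y0, hy0Pi, fun h => hy0v h.symm⟩
  refine exists_equitable_of_partition Qf s Fdis Fcov Find ?_
  intro k
  by_cases hkU : k = U
  · rw [hkU, hQfU, hQ6U, Finset.card_insert_of_notMem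
      (fun h => hxnotin U (Finset.mem_of_mem_erase h)),
      Finset.card_erase_of_mem huU, hcs U hU0]
    omega
  rw [hQfk k hkU]
  by_cases hki : k = i
  · have huPi : u ∉ insert w (((P i).erase y0).erase v) := by
      intro h
      rcases Finset.mem_insert.mp h with h' | h'
      · exact hwu' h'
      · exact Finset.disjoint_left.mp (hdis U i hUi) huU
          (Finset.mem_of_mem_erase (Finset.mem_of_mem_erase h'))
    have hwPi' : w ∉ ((P i).erase y0).erase v := fun h =>
      Finset.disjoint_left.mp (hdis W i hWi) hwW
        (Finset.mem_of_mem_erase (Finset.mem_of_mem_erase h))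
    rw [hki, hQ6i, Finset.card_insert_of_notMem huPi,
      Finset.card_insert_of_notMem hwPi',
      Finset.card_erase_of_mem (Finset.mem_erase.mpr ⟨fun h => hy0v h.symm, hvi⟩),
      Finset.card_erase_of_mem hy0Pi, hcs i hi0]
    omega
  rw [hQ6k k hkU hki]
  by_cases hkW : k = W
  · rw [hkW, hQ5W, Finset.card_erase_of_mem (Finset.mem_insert_of_mem hwW),
      Finset.card_insert_of_notMem
        (fun h => Finset.disjoint_left.mp (hdis i W (fun h' => hWi h'.symm)) hvi h),
      hcs W hW0]
    omega
  rw [hQ5k k hkW hki]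
  rw [hQ4k k hki hkW]
  by_cases hkd1 : k = d1
  · rw [hkd1, hQ3d1, Finset.card_insert_of_notMem
      (fun h => Finset.disjoint_left.mp (hdis i d1 (fun h' => hd1i h'.symm)) hy0Pi (Qsubd1 h)),
      Qcardd1]
    omega
  · rw [hQ3k k hki hkd1]
    exact Qcards k hkd1

/-- Generic counting: if every vertex of `X` has a neighbor in at least 4 of the 5
pairwise-disjoint parts of `Y`, then `edgesBetween G X Y ≥ 4 |X|`. -/
lemma edges_lower_bound [Fintype V] (G : SimpleGraph V) (X : Finset V)
    (parts : Fin 5 → Finset V) (Y : Finset V)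
    (hparts : ∀ p, parts p ⊆ Y)
    (hpdis : ∀ p q : Fin 5, p ≠ q → Disjoint (parts p) (parts q))
    (hXY : Disjoint X Y)
    (h4 : ∀ a ∈ X, 4 ≤ ((Finset.univ : Finset (Fin 5)).filter
      (fun p => ∃ b ∈ parts p, G.Adj a b)).card) :
    4 * X.card ≤ edgesBetween G X Y := by
  classical
  set good : V → Finset (Fin 5) := fun a => (Finset.univ : Finset (Fin 5)).filter
      (fun p => ∃ b ∈ parts p, G.Adj a b) with hgood
  set pick : V → Fin 5 → V := fun a p =>
    if h : ∃ b ∈ parts p, G.Adj a b then h.choose else a with hpick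
  have hpick_spec : ∀ a p, (∃ b ∈ parts p, G.Adj a b) →
      pick a p ∈ parts p ∧ G.Adj a (pick a p) := by
    intro a p h
    simp only [hpick, dif_pos h]
    exact ⟨h.choose_spec.1, h.choose_spec.2⟩
  have hcard : 4 * X.card ≤ (X.sigma good).card := by
    rw [Finset.card_sigma]
    calc 4 * X.card = ∑ _a ∈ X, 4 := by rw [Finset.sum_const, smul_eq_mul, mul_comm]
    _ ≤ ∑ a ∈ X, (good a).card := Finset.sum_le_sum h4
  refine le_trans hcard ?_
  unfold edgesBetween
  apply Finset.card_le_card_of_injOn (fun q => s(q.1, pick q.1 q.2))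
  · rintro ⟨a, p⟩ hq
    rw [Finset.mem_coe, Finset.mem_sigma] at hq
    obtain ⟨haX, hp⟩ := hq
    rw [hgood, Finset.mem_filter] at hp
    obtain ⟨-, hex⟩ := hp
    obtain ⟨hb1, hb2⟩ := hpick_spec a p hex
    rw [Finset.mem_coe, Finset.mem_filter]
    exact ⟨SimpleGraph.mem_edgeFinset.mpr hb2, a, haX, pick a p, hparts p hb1, rfl⟩
  · rintro ⟨a, p⟩ ha ⟨a', p'⟩ ha' heq
    rw [Finset.mem_coe, Finset.mem_sigma] at ha ha'
    obtain ⟨haX, hp⟩ := ha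
    obtain ⟨haX', hp'⟩ := ha'
    rw [hgood, Finset.mem_filter] at hp hp'
    obtain ⟨-, hex⟩ := hp
    obtain ⟨-, hex'⟩ := hp'
    obtain ⟨hb1, _⟩ := hpick_spec a p hex
    obtain ⟨hb1', _⟩ := hpick_spec a' p' hex'
    simp only [Sym2.eq_iff] at heq
    have hab : a = a' ∧ pick a p = pick a' p' := by
      rcases heq with ⟨h1, h2⟩ | ⟨h1, h2⟩
      · exact ⟨h1, h2⟩
      · exact absurd (hparts p' (h1 ▸ hb1')) (Finset.disjoint_left.mp hXY haX)
    obtain ⟨rfl, hpp⟩ := hab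
    have : p = p' := by
      by_contra hne
      exact Finset.disjoint_left.mp (hpdis p p' hne) hb1 (hpp ▸ hb1')
    subst this
    rfl

set_option maxHeartbeats 1000000 in
lemma caseB2 [Fintype V] {G : SimpleGraph V} {x : V} (s : ℕ) (hs : 1 ≤ s)
    (P : Fin 8 → Finset V) (hP : AEColoring G x s P) (hbip : PlanarBipBound G)
    (i Ycl Zcl W U M2 M3 : Fin 8) (u : V) (huU : u ∈ P U)
    (hi0 : i ≠ 0) (hY0 : Ycl ≠ 0) (hZ0 : Zcl ≠ 0) (hYZ : Ycl ≠ Zcl)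
    (hYi : Ycl ≠ i) (hZi : Zcl ≠ i)
    (hW0 : W ≠ 0) (hWY : W ≠ Ycl) (hWZ : W ≠ Zcl) (hWi : W ≠ i)
    (hU0 : U ≠ 0) (hUY : U ≠ Ycl) (hUZ : U ≠ Zcl) (hUi : U ≠ i) (hUW : U ≠ W)
    (hM20 : M2 ≠ 0) (hM2Y : M2 ≠ Ycl) (hM2Z : M2 ≠ Zcl) (hM2i : M2 ≠ i)
    (hM2W : M2 ≠ W) (hM2U : M2 ≠ U)
    (hM30 : M3 ≠ 0) (hM3Y : M3 ≠ Ycl) (hM3Z : M3 ≠ Zcl) (hM3i : M3 ≠ i)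
    (hM3W : M3 ≠ W) (hM3U : M3 ≠ U) (hM23 : M2 ≠ M3)
    (hBforced : ∀ M : Fin 8, (M = U ∨ M = M2 ∨ M = M3) → ∀ a ∈ P M,
      ∀ cls : Fin 8, (cls = 0 ∨ cls = Ycl ∨ cls = Zcl ∨ cls = i) → ∃ b ∈ P cls, G.Adj a b)
    (hWforced : ∀ a ∈ P W, ∀ cls : Fin 8, (cls = 0 ∨ cls = Ycl ∨ cls = Zcl) →
      ∃ b ∈ P cls, G.Adj a b)
    (hWiu : ∀ a ∈ P W, (∃ b ∈ P i, G.Adj a b) ∨ G.Adj a u) : False := by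
  classical
  obtain ⟨hdis, hcov, hind, hc0, hcs⟩ := hP
  set parts : Fin 5 → Finset V := ![P 0, P Ycl, P Zcl, P i, {u}] with hpartsdef
  have e0 : parts 0 = P 0 := rfl
  have e1 : parts 1 = P Ycl := rfl
  have e2 : parts 2 = P Zcl := rfl
  have e3 : parts 3 = P i := rfl
  have e4 : parts 4 = {u} := rfl
  have hp5 : ∀ p : Fin 5, p = 0 ∨ p = 1 ∨ p = 2 ∨ p = 3 ∨ p = 4 := by decide
  set Y : Finset V := P 0 ∪ P Ycl ∪ P Zcl ∪ P i ∪ {u} with hYdef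
  set X : Finset V := P W ∪ ((P U).erase u ∪ (P M2 ∪ P M3)) with hXdef
  have husing : ∀ k, k ≠ U → u ∉ P k := by
    intro k hk hmem
    exact Finset.disjoint_left.mp (hdis k U hk) hmem huU
  have hmemY : ∀ a, a ∈ Y ↔ (a ∈ P 0 ∨ a ∈ P Ycl ∨ a ∈ P Zcl ∨ a ∈ P i ∨ a = u) := by
    intro a
    simp only [hYdef, Finset.mem_union, Finset.mem_singleton]
    tauto
  have hmemX : ∀ a, a ∈ X ↔ (a ∈ P W ∨ (a ∈ P U ∧ a ≠ u) ∨ a ∈ P M2 ∨ a ∈ P M3) := by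
    intro a
    simp only [hXdef, Finset.mem_union, Finset.mem_erase]
    tauto
  have hparts : ∀ p, parts p ⊆ Y := by
    intro p
    rcases hp5 p with rfl | rfl | rfl | rfl | rfl
    · rw [e0]; intro a ha; rw [hmemY]; tauto
    · rw [e1]; intro a ha; rw [hmemY]; tauto
    · rw [e2]; intro a ha; rw [hmemY]; tauto
    · rw [e3]; intro a ha; rw [hmemY]; tauto
    · rw [e4]; intro a ha; rw [hmemY]
      rw [Finset.mem_singleton] at ha
      tauto
  have dU : ∀ k, k ≠ U → Disjoint (P k) ({u} : Finset V) := fun k hk => Finset.disjoint_singleton_right.mpr (husing k hk)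
  have hpdis : ∀ p q : Fin 5, p ≠ q → Disjoint (parts p) (parts q) := by
    intro p q hpq
    rcases hp5 p with rfl | rfl | rfl | rfl | rfl <;>
      rcases hp5 q with rfl | rfl | rfl | rfl | rfl <;>
      simp only [e0, e1, e2, e3, e4]
    · exact absurd rfl hpq
    · exact hdis _ _ (Ne.symm hY0)
    · exact hdis _ _ (Ne.symm hZ0)
    · exact hdis _ _ (Ne.symm hi0)
    · exact dU _ (Ne.symm hU0)
    · exact hdis _ _ hY0
    · exact absurd rfl hpq
    · exact hdis _ _ hYZ
    · exact hdis _ _ hYi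
    · exact dU _ (Ne.symm hUY)
    · exact hdis _ _ hZ0
    · exact hdis _ _ (Ne.symm hYZ)
    · exact absurd rfl hpq
    · exact hdis _ _ hZi
    · exact dU _ (Ne.symm hUZ)
    · exact hdis _ _ hi0
    · exact hdis _ _ (Ne.symm hYi)
    · exact hdis _ _ (Ne.symm hZi)
    · exact absurd rfl hpq
    · exact dU _ (Ne.symm hUi)
    · exact (dU _ (Ne.symm hU0)).symm
    · exact (dU _ (Ne.symm hUY)).symm
    · exact (dU _ (Ne.symm hUZ)).symm
    · exact (dU _ (Ne.symm hUi)).symm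
    · exact absurd rfl hpq
  have hXY : Disjoint X Y := by
    rw [Finset.disjoint_left]
    intro a haX haY
    rw [hmemX] at haX
    rw [hmemY] at haY
    rcases haX with hW' | ⟨hU', hau⟩ | hM2' | hM3' <;>
      rcases haY with h0' | hY' | hZ' | hi' | rfl
    · exact Finset.disjoint_left.mp (hdis W 0 hW0) hW' h0'
    · exact Finset.disjoint_left.mp (hdis W Ycl hWY) hW' hY'
    · exact Finset.disjoint_left.mp (hdis W Zcl hWZ) hW' hZ'
    · exact Finset.disjoint_left.mp (hdis W i hWi) hW' hi'
    · exact husing W (Ne.symm hUW) hW'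
    · exact Finset.disjoint_left.mp (hdis U 0 hU0) hU' h0'
    · exact Finset.disjoint_left.mp (hdis U Ycl hUY) hU' hY'
    · exact Finset.disjoint_left.mp (hdis U Zcl hUZ) hU' hZ'
    · exact Finset.disjoint_left.mp (hdis U i hUi) hU' hi'
    · exact hau rfl
    · exact Finset.disjoint_left.mp (hdis M2 0 hM20) hM2' h0'
    · exact Finset.disjoint_left.mp (hdis M2 Ycl hM2Y) hM2' hY'
    · exact Finset.disjoint_left.mp (hdis M2 Zcl hM2Z) hM2' hZ'
    · exact Finset.disjoint_left.mp (hdis M2 i hM2i) hM2' hi'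
    · exact husing M2 hM2U hM2'
    · exact Finset.disjoint_left.mp (hdis M3 0 hM30) hM3' h0'
    · exact Finset.disjoint_left.mp (hdis M3 Ycl hM3Y) hM3' hY'
    · exact Finset.disjoint_left.mp (hdis M3 Zcl hM3Z) hM3' hZ'
    · exact Finset.disjoint_left.mp (hdis M3 i hM3i) hM3' hi'
    · exact husing M3 hM3U hM3'
  set good : V → Finset (Fin 5) := fun a => (Finset.univ : Finset (Fin 5)).filter
      (fun p => ∃ b ∈ parts p, G.Adj a b) with hgooddef
  have hgoodmem : ∀ a (p : Fin 5), (∃ b ∈ parts p, G.Adj a b) → p ∈ good a := by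
    intro a p h
    rw [hgooddef]
    exact Finset.mem_filter.mpr ⟨Finset.mem_univ _, h⟩
  have h4 : ∀ a ∈ X, 4 ≤ (good a).card := by
    intro a haX
    rw [hmemX] at haX
    have hBside : ∀ M : Fin 8, (M = U ∨ M = M2 ∨ M = M3) → a ∈ P M → 4 ≤ (good a).card := by
      intro M hM haM
      have h0 : (0 : Fin 5) ∈ good a := hgoodmem a 0 (by
        rw [e0]; exact hBforced M hM a haM 0 (Or.inl rfl))
      have h1 : (1 : Fin 5) ∈ good a := hgoodmem a 1 (by
        rw [e1]; exact hBforced M hM a haM Ycl (Or.inr (Or.inl rfl)))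
      have h2 : (2 : Fin 5) ∈ good a := hgoodmem a 2 (by
        rw [e2]; exact hBforced M hM a haM Zcl (Or.inr (Or.inr (Or.inl rfl))))
      have h3 : (3 : Fin 5) ∈ good a := hgoodmem a 3 (by
        rw [e3]; exact hBforced M hM a haM i (Or.inr (Or.inr (Or.inr rfl))))
      have hsub : ({0, 1, 2, 3} : Finset (Fin 5)) ⊆ good a := by
        intro p hp
        simp only [Finset.mem_insert, Finset.mem_singleton] at hp
        rcases hp with rfl | rfl | rfl | rfl
        exacts [h0, h1, h2, h3]
      calc (4 : ℕ) = ({0, 1, 2, 3} : Finset (Fin 5)).card := by decide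
        _ ≤ (good a).card := Finset.card_le_card hsub
    rcases haX with hW' | ⟨hU', _⟩ | hM2' | hM3'
    · have h0 : (0 : Fin 5) ∈ good a := hgoodmem a 0 (by
        rw [e0]; exact hWforced a hW' 0 (Or.inl rfl))
      have h1 : (1 : Fin 5) ∈ good a := hgoodmem a 1 (by
        rw [e1]; exact hWforced a hW' Ycl (Or.inr (Or.inl rfl)))
      have h2 : (2 : Fin 5) ∈ good a := hgoodmem a 2 (by
        rw [e2]; exact hWforced a hW' Zcl (Or.inr (Or.inr rfl)))
      rcases hWiu a hW' with hi' | hu'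
      · have h3 : (3 : Fin 5) ∈ good a := hgoodmem a 3 (by rw [e3]; exact hi')
        have hsub : ({0, 1, 2, 3} : Finset (Fin 5)) ⊆ good a := by
          intro p hp
          simp only [Finset.mem_insert, Finset.mem_singleton] at hp
          rcases hp with rfl | rfl | rfl | rfl
          exacts [h0, h1, h2, h3]
        calc (4 : ℕ) = ({0, 1, 2, 3} : Finset (Fin 5)).card := by decide
          _ ≤ (good a).card := Finset.card_le_card hsub
      · have h4' : (4 : Fin 5) ∈ good a := hgoodmem a 4 (by
          rw [e4]; exact ⟨u, Finset.mem_singleton_self u, hu'⟩)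
        have hsub : ({0, 1, 2, 4} : Finset (Fin 5)) ⊆ good a := by
          intro p hp
          simp only [Finset.mem_insert, Finset.mem_singleton] at hp
          rcases hp with rfl | rfl | rfl | rfl
          exacts [h0, h1, h2, h4']
        calc (4 : ℕ) = ({0, 1, 2, 4} : Finset (Fin 5)).card := by decide
          _ ≤ (good a).card := Finset.card_le_card hsub
    · exact hBside U (Or.inl rfl) hU'
    · exact hBside M2 (Or.inr (Or.inl rfl)) hM2'
    · exact hBside M3 (Or.inr (Or.inr rfl)) hM3'
  -- cardinalities
  have hYcard : Y.card = (s - 1) + s + s + s + 1 := by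
    rw [hYdef]
    rw [Finset.card_union_of_disjoint (by
      simp only [Finset.disjoint_singleton_right, Finset.mem_union]
      push_neg
      exact ⟨⟨⟨husing 0 (Ne.symm hU0), husing Ycl (Ne.symm hUY)⟩, husing Zcl (Ne.symm hUZ)⟩,
        husing i (Ne.symm hUi)⟩)]
    rw [Finset.card_union_of_disjoint (Finset.disjoint_union_left.mpr
      ⟨Finset.disjoint_union_left.mpr ⟨hdis 0 i (Ne.symm hi0), hdis Ycl i hYi⟩, hdis Zcl i hZi⟩)]
    rw [Finset.card_union_of_disjoint (Finset.disjoint_union_left.mpr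
      ⟨hdis 0 Zcl (Ne.symm hZ0), hdis Ycl Zcl hYZ⟩)]
    rw [Finset.card_union_of_disjoint (hdis 0 Ycl (Ne.symm hY0))]
    rw [hc0, hcs Ycl hY0, hcs Zcl hZ0, hcs i hi0]
    simp
  have hXcard : X.card = s + ((s - 1) + (s + s)) := by
    rw [hXdef]
    rw [Finset.card_union_of_disjoint (by
      apply Finset.disjoint_union_right.mpr
      constructor
      · exact Finset.disjoint_of_subset_right (Finset.erase_subset _ _) (hdis W U (Ne.symm hUW))
      · exact Finset.disjoint_union_right.mpr ⟨hdis W M2 (Ne.symm hM2W), hdis W M3 (Ne.symm hM3W)⟩)]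
    rw [Finset.card_union_of_disjoint (by
      apply Finset.disjoint_union_right.mpr
      exact ⟨Finset.disjoint_of_subset_left (Finset.erase_subset _ _) (hdis U M2 (Ne.symm hM2U)),
        Finset.disjoint_of_subset_left (Finset.erase_subset _ _) (hdis U M3 (Ne.symm hM3U))⟩)]
    rw [Finset.card_union_of_disjoint (hdis M2 M3 hM23)]
    rw [Finset.card_erase_of_mem huU, hcs W hW0, hcs U hU0, hcs M2 hM20, hcs M3 hM30]
  have hlow := edges_lower_bound G X parts Y hparts hpdis hXY h4
  have hbound := hbip X Y hXY (by omega)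
  omega

end Helpers

/-- **Lemma 4.5.** Let `G` be a graph on `8s` vertices satisfying the planar bipartite
edge bound with no equitable `8`-coloring, and let `P` be an almost equitable coloring
of `G − x` maximizing the number of accessible classes, with exactly `5` accessible
classes, such that `x` has no neighbor in any non-accessible class and the coloring is
nice (every accessible class other than the small class `P 0` blocks at most one
accessible class).  Then every vertex `v` of an accessible class `P i ≠ P 0` that has a
solo neighbor in a non-accessible class has a neighbor in every other accessible
class. -/
theorem nice_solo_vertex_neighbor_everywhere (V : Type*) [Fintype V]
    (G : SimpleGraph V) (x : V) (s : ℕ) (hs : 1 ≤ s)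
    (hcard : Fintype.card V = 8 * s) (hbip : PlanarBipBound G)
    (hno : ¬ ∃ c : V → Fin 8, IsEquitableColoring G 8 c)
    (P : Fin 8 → Finset V) (hP : AEColoring G x s P)
    (hmax : MaxAccessible G x s P)
    (h5 : accCount G P = 5)
    (hx : ∀ k : Fin 8, ¬ Accessible G P k → ∀ u ∈ P k, ¬ G.Adj x u)
    (hnice : ∀ i : Fin 8, Accessible G P i → i ≠ 0 →
      (Finset.univ.filter fun j : Fin 8 =>
        Accessible G P j ∧ Blocks G P i j).card ≤ 1) :
    ∀ i : Fin 8, Accessible G P i → i ≠ 0 → ∀ v ∈ P i,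
      (∃ u : V, SoloNbr G P i v u) →
      ∀ j : Fin 8, Accessible G P j → j ≠ i → ∃ w ∈ P j, G.Adj v w := by
  intro i hiacc hi0 v hvi hsolo_ex j hjacc hji
  by_contra hcon
  push_neg at hcon
  obtain ⟨u, ⟨U, hUnacc, huU⟩, hadjvu, hsolo⟩ := hsolo_ex
  have hxU : ∀ b ∈ P U, ¬ G.Adj x b := hx U hUnacc
  -- the helper for contradicting niceness with two blocked classes
  have two_blocked : ∀ X Y' : Fin 8, X ≠ Y' → Accessible G P X → Accessible G P Y' →
      Blocks G P i X → Blocks G P i Y' → False := by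
    intro X Y' hXY hAX hAY hBX hBY
    have h1 := hnice i hiacc hi0
    have hsub : ({X, Y'} : Finset (Fin 8)) ⊆
        Finset.univ.filter (fun k => Accessible G P k ∧ Blocks G P i k) := by
      intro k hk
      simp only [Finset.mem_insert, Finset.mem_singleton] at hk
      refine Finset.mem_filter.mpr ⟨Finset.mem_univ _, ?_⟩
      rcases hk with rfl | rfl
      exacts [⟨hAX, hBX⟩, ⟨hAY, hBY⟩]
    have h2 : 2 ≤ (Finset.univ.filter
        (fun k => Accessible G P k ∧ Blocks G P i k)).card := by
      have := Finset.card_le_card hsub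
      rwa [Finset.card_insert_of_notMem (by simpa using hXY), Finset.card_singleton] at this
    omega
  -- Case A for the class j itself
  by_cases hblk : Relation.ReflTransGen (fun p q => Arc G P p q ∧ p ≠ i ∧ q ≠ i) j 0
  · exact hno (caseA s hs P hP i hiacc hi0 v hvi U hUnacc u huU hsolo hxU j hji hblk hcon)
  -- otherwise `i` blocks `j`; first, `v` has a neighbor in every other accessible class
  have hBj : Blocks G P i j := ⟨Ne.symm hji, hblk⟩
  have hMiss : ∀ X : Fin 8, Accessible G P X → X ≠ i → X ≠ j → ∃ b ∈ P X, G.Adj v b := by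
    intro X hXacc hXi hXj
    by_contra hmiss
    push_neg at hmiss
    by_cases hblk2 : Relation.ReflTransGen (fun p q => Arc G P p q ∧ p ≠ i ∧ q ≠ i) X 0
    · exact hno (caseA s hs P hP i hiacc hi0 v hvi U hUnacc u huU hsolo hxU X hXi hblk2 hmiss)
    · exact two_blocked X j (fun h => hXj h) hXacc hjacc ⟨Ne.symm hXi, hblk2⟩ hBj
  -- case split on the existence of a witness `w` non-adjacent to `u`
  by_cases hB1 : ∃ w ∈ P j, (∀ b ∈ P i, ¬ G.Adj w b) ∧ ¬ G.Adj u w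
  · obtain ⟨w, hwW, hwPi, hwu⟩ := hB1
    exact hno (caseB1 s hs P hP i hiacc hi0 v hvi U hUnacc u huU hsolo hxU j hji hjacc hblk
      hcon hMiss w hwW hwPi hwu)
  push_neg at hB1
  -- Case B2: counting contradiction
  -- name the two remaining accessible classes and the two remaining inaccessible classes
  have hA5 : (Finset.univ.filter (fun k => Accessible G P k)).card = 5 := h5
  have hacc0 : Accessible G P 0 := Relation.ReflTransGen.refl
  have hj0 : j ≠ 0 := by
    rintro rfl
    exact hblk Relation.ReflTransGen.refl
  have hsub3 : ({0, i, j} : Finset (Fin 8)) ⊆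
      Finset.univ.filter (fun k => Accessible G P k) := by
    intro k hk
    simp only [Finset.mem_insert, Finset.mem_singleton] at hk
    refine Finset.mem_filter.mpr ⟨Finset.mem_univ _, ?_⟩
    rcases hk with rfl | rfl | rfl
    exacts [hacc0, hiacc, hjacc]
  have hcard3 : ({0, i, j} : Finset (Fin 8)).card = 3 := by
    rw [Finset.card_insert_of_notMem (by simp [Ne.symm hi0, Ne.symm hj0]),
      Finset.card_insert_of_notMem (by simpa using fun h => hji h.symm),
      Finset.card_singleton]
  have hScard : ((Finset.univ.filter (fun k => Accessible G P k)) \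
      ({0, i, j} : Finset (Fin 8))).card = 2 := by
    rw [Finset.card_sdiff_of_subset hsub3, hA5, hcard3]
  obtain ⟨Ycl, Zcl, hYZ, hSeq⟩ := Finset.card_eq_two.mp hScard
  have hYmem : Ycl ∈ (Finset.univ.filter (fun k => Accessible G P k)) \
      ({0, i, j} : Finset (Fin 8)) := by rw [hSeq]; exact Finset.mem_insert_self _ _
  have hZmem : Zcl ∈ (Finset.univ.filter (fun k => Accessible G P k)) \
      ({0, i, j} : Finset (Fin 8)) := by
    rw [hSeq]; exact Finset.mem_insert_of_mem (Finset.mem_singleton_self _)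
  rw [Finset.mem_sdiff, Finset.mem_filter] at hYmem hZmem
  obtain ⟨⟨-, hYacc⟩, hYnot⟩ := hYmem
  obtain ⟨⟨-, hZacc⟩, hZnot⟩ := hZmem
  simp only [Finset.mem_insert, Finset.mem_singleton, not_or] at hYnot hZnot
  obtain ⟨hY0, hYi, hYj⟩ := hYnot
  obtain ⟨hZ0, hZi, hZj⟩ := hZnot
  -- the inaccessible classes
  have hBcard : (Finset.univ.filter (fun k => ¬ Accessible G P k)).card = 3 := by
    have := Finset.card_filter_add_card_filter_not
      (s := (Finset.univ : Finset (Fin 8))) (p := fun k => Accessible G P k)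
    simp only [Finset.card_univ, Fintype.card_fin] at this
    omega
  have hUB : U ∈ Finset.univ.filter (fun k => ¬ Accessible G P k) :=
    Finset.mem_filter.mpr ⟨Finset.mem_univ _, hUnacc⟩
  have hTcard : ((Finset.univ.filter (fun k => ¬ Accessible G P k)).erase U).card = 2 := by
    rw [Finset.card_erase_of_mem hUB, hBcard]
  obtain ⟨M2, M3, hM23, hTeq⟩ := Finset.card_eq_two.mp hTcard
  have hM2mem : M2 ∈ (Finset.univ.filter (fun k => ¬ Accessible G P k)).erase U := by
    rw [hTeq]; exact Finset.mem_insert_self _ _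
  have hM3mem : M3 ∈ (Finset.univ.filter (fun k => ¬ Accessible G P k)).erase U := by
    rw [hTeq]; exact Finset.mem_insert_of_mem (Finset.mem_singleton_self _)
  rw [Finset.mem_erase, Finset.mem_filter] at hM2mem hM3mem
  obtain ⟨hM2U, -, hM2nacc⟩ := hM2mem
  obtain ⟨hM3U, -, hM3nacc⟩ := hM3mem
  -- inequalities coming from accessibility
  have hnacc_ne : ∀ M : Fin 8, ¬ Accessible G P M → ∀ cls : Fin 8, Accessible G P cls →
      M ≠ cls := by
    rintro M hM cls hcls rfl
    exact hM hcls
  -- restricted paths from the accessible classes other than i, j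
  have hpath : ∀ X : Fin 8, Accessible G P X → X ≠ i → X ≠ j →
      Relation.ReflTransGen (fun p q => Arc G P p q ∧ p ≠ i ∧ q ≠ i) X 0 := by
    intro X hXacc hXi hXj
    by_contra hblk2
    exact two_blocked X j (fun h => hXj h) hXacc hjacc ⟨Ne.symm hXi, hblk2⟩ hBj
  -- forced edges from inaccessible classes to accessible classes
  have hBforced : ∀ M : Fin 8, (M = U ∨ M = M2 ∨ M = M3) → ∀ a ∈ P M,
      ∀ cls : Fin 8, (cls = 0 ∨ cls = Ycl ∨ cls = Zcl ∨ cls = i) →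
        ∃ b ∈ P cls, G.Adj a b := by
    intro M hM a haM cls hcls
    have hMnacc : ¬ Accessible G P M := by
      rcases hM with rfl | rfl | rfl
      exacts [hUnacc, hM2nacc, hM3nacc]
    have hclsacc : Accessible G P cls := by
      rcases hcls with rfl | rfl | rfl | rfl
      exacts [hacc0, hYacc, hZacc, hiacc]
    by_contra hne
    push_neg at hne
    exact hMnacc (Relation.ReflTransGen.head
      (⟨hnacc_ne M hMnacc cls hclsacc, a, haM, fun b hb => hne b hb⟩ : Arc G P M cls) hclsacc)
  -- forced edges from the class j to the accessible classes other than i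
  have hWforced : ∀ a ∈ P j, ∀ cls : Fin 8, (cls = 0 ∨ cls = Ycl ∨ cls = Zcl) →
      ∃ b ∈ P cls, G.Adj a b := by
    intro a haj cls hcls
    by_contra hne
    push_neg at hne
    have hclsi : cls ≠ i := by
      rcases hcls with rfl | rfl | rfl
      exacts [Ne.symm hi0, hYi, hZi]
    have hclsj : cls ≠ j := by
      rcases hcls with rfl | rfl | rfl
      exacts [Ne.symm hj0, hYj, hZj]
    have hclsacc : Accessible G P cls := by
      rcases hcls with rfl | rfl | rfl
      exacts [hacc0, hYacc, hZacc]
    have hclspath : Relation.ReflTransGen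
        (fun p q => Arc G P p q ∧ p ≠ i ∧ q ≠ i) cls 0 :=
      hpath cls hclsacc hclsi hclsj
    exact hblk (Relation.ReflTransGen.head
      ⟨⟨Ne.symm hclsj, a, haj, fun b hb => hne b hb⟩, hji, hclsi⟩ hclspath)
  have hWiu : ∀ a ∈ P j, (∃ b ∈ P i, G.Adj a b) ∨ G.Adj a u := by
    intro a haj
    by_cases hex : ∃ b ∈ P i, G.Adj a b
    · exact Or.inl hex
    · push_neg at hex
      exact Or.inr (G.adj_symm (hB1 a haj hex))
  exact caseB2 s hs P hP hbip i Ycl Zcl j U M2 M3 u huU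
    hi0 hY0 hZ0 hYZ hYi hZi
    hj0 (Ne.symm hYj) (Ne.symm hZj) hji
    (hnacc_ne U hUnacc 0 hacc0) (hnacc_ne U hUnacc Ycl hYacc) (hnacc_ne U hUnacc Zcl hZacc)
    (hnacc_ne U hUnacc i hiacc) (hnacc_ne U hUnacc j hjacc)
    (hnacc_ne M2 hM2nacc 0 hacc0) (hnacc_ne M2 hM2nacc Ycl hYacc)
    (hnacc_ne M2 hM2nacc Zcl hZacc) (hnacc_ne M2 hM2nacc i hiacc)
    (hnacc_ne M2 hM2nacc j hjacc) hM2U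
    (hnacc_ne M3 hM3nacc 0 hacc0) (hnacc_ne M3 hM3nacc Ycl hYacc)
    (hnacc_ne M3 hM3nacc Zcl hZacc) (hnacc_ne M3 hM3nacc i hiacc)
    (hnacc_ne M3 hM3nacc j hjacc) hM3U hM23
    hBforced hWforced hWiu

end Equitable
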